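/- Let x_r, x_g, x_b be variables in a noncommutative ℤ[q^{±1/2}]-algebra satisfying x_r x_g = q x_g x_r, x_r x_b = q^{-1} x_b x_r, x_g x_b = q^{-1} x_b x_g, with q central. Then for every N, the product ∏_{j} (1 + q^j x_r + q^{-j} x_g + q^j x_b), taken over j ∈ {-(N-1)/2, -(N-1)/2+1, ..., (N-1)/2} in increasing order, when expanded and written with each monomial in the normal order x_r^{β} x_g^{γ} x_b^{α} (up to a power of q), has coefficient of the normally ordered monomial such that the total coefficient of x_r^{b} x_g^{c} x_b^{a} equals the symmetric quantum multinomial [N]!/([a]![b]![c]![N-a-b-c]!). -/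

import Mathlib

open Finset

/-- `q^{1/2}`, as the generator of the field `K = ℚ(q^{1/2})`. -/
noncomputable def s : RatFunc ℚ := RatFunc.X

/-- The symmetric quantum integer `[n] = (q^{n/2} - q^{-n/2})/(q^{1/2} - q^{-1/2})`. -/
noncomputable def qint (n : ℕ) : RatFunc ℚ := (s ^ n - s⁻¹ ^ n) / (s - s⁻¹)

/-- The symmetric quantum factorial `[n]! = ∏_{j=1}^n [j]`. -/
noncomputable def qfact : ℕ → RatFunc ℚ
  | 0 => 1
  | n + 1 => qfact n * qint (n + 1)

/-- The symmetric quantum multinomial `[N]!/([a]![b]![c]![N-a-b-c]!)`,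
set to `0` when `a + b + c > N`. -/
noncomputable def qmultinom (N a b c : ℕ) : RatFunc ℚ :=
  if a + b + c ≤ N then
    qfact N / (qfact a * qfact b * qfact c * qfact (N - a - b - c)) else 0

lemma s_ne_zero : s ≠ 0 := RatFunc.X_ne_zero

lemma s_pow_ne_one {n : ℕ} (hn : n ≠ 0) : s ^ n ≠ 1 := by
  intro h
  have h2 : (algebraMap (Polynomial ℚ) (RatFunc ℚ)) (Polynomial.X ^ n) =
      (algebraMap (Polynomial ℚ) (RatFunc ℚ)) 1 := by
    simpa [map_pow, RatFunc.algebraMap_X, s] using h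
  have h3 : (Polynomial.X : Polynomial ℚ) ^ n = 1 :=
    IsFractionRing.injective (Polynomial ℚ) (RatFunc ℚ) h2
  have := congrArg Polynomial.natDegree h3
  simp [Polynomial.natDegree_X_pow] at this
  exact hn this

lemma s_sub_inv_pow_ne_zero {n : ℕ} (hn : n ≠ 0) : s ^ n - s⁻¹ ^ n ≠ 0 := by
  intro h
  have h1 : s ^ n = s⁻¹ ^ n := sub_eq_zero.mp h
  have h2 : s ^ (n + n) = 1 := by
    rw [pow_add]
    nth_rewrite 1 [h1]
    rw [← mul_pow, inv_mul_cancel₀ s_ne_zero, one_pow]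
  exact s_pow_ne_one (by omega) h2

lemma s_sub_inv_ne_zero : s - s⁻¹ ≠ 0 := by
  have := s_sub_inv_pow_ne_zero (n := 1) one_ne_zero
  simpa using this

lemma qint_ne_zero {n : ℕ} (hn : n ≠ 0) : qint n ≠ 0 :=
  div_ne_zero (s_sub_inv_pow_ne_zero hn) s_sub_inv_ne_zero

lemma qfact_ne_zero : ∀ n, qfact n ≠ 0
  | 0 => one_ne_zero
  | n + 1 => mul_ne_zero (qfact_ne_zero n) (qint_ne_zero (Nat.succ_ne_zero n))

lemma qint_zero : qint 0 = 0 := by simp [qint]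

lemma zint (n : ℕ) : qint n = (s ^ (n : ℤ) - s ^ (-(n : ℤ))) / (s - s⁻¹) := by
  rw [qint, zpow_natCast, zpow_neg, zpow_natCast, inv_pow]

/-- core scalar identity -/
lemma qint_core (N a b c : ℕ) (h : a + b + c ≤ N + 1) :
    s ^ ((a : ℤ) + b - c) * qint (N + 1) =
      qint (N + 1 - a - b - c) + s ^ ((N : ℤ) + 1 + a - c) * qint b
        + s ^ ((a : ℤ) + b - ((N : ℤ) + 1)) * qint c
        + s ^ ((N : ℤ) + 1 - b - c) * qint a := by
  have hs := s_ne_zero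
  obtain ⟨d, hd⟩ : ∃ d, N + 1 = a + b + c + d := ⟨N + 1 - a - b - c, by omega⟩
  have hd2 : N + 1 - a - b - c = d := by omega
  have hd' : (N : ℤ) + 1 = (a : ℤ) + b + c + d := by omega
  rw [hd2, hd, hd']
  simp only [zint]
  push_cast
  simp only [← mul_div_assoc, ← add_div]
  congr 1
  simp only [mul_sub, ← zpow_add₀ hs]
  ring_nf

lemma ratio_top (N a b c : ℕ) (h : a + b + c ≤ N + 1) :
    qint (N + 1) * qmultinom N a b c =
      qint (N + 1 - a - b - c) * qmultinom (N + 1) a b c := by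
  by_cases h' : a + b + c ≤ N
  · rw [qmultinom, if_pos h', qmultinom, if_pos h]
    have e1 : N + 1 - a - b - c = (N - a - b - c) + 1 := by omega
    rw [e1, show qfact ((N-a-b-c)+1) = qfact (N-a-b-c) * qint ((N-a-b-c)+1) from rfl,
      show qfact (N+1) = qfact N * qint (N+1) from rfl]
    have h1 := qfact_ne_zero a
    have h2 := qfact_ne_zero b
    have h3 := qfact_ne_zero c
    have h4 := qfact_ne_zero (N - a - b - c)
    have h5 : qint ((N-a-b-c)+1) ≠ 0 := qint_ne_zero (Nat.succ_ne_zero _)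
    field_simp
  · have e0 : N + 1 - a - b - c = 0 := by omega
    rw [qmultinom, if_neg h', e0, qint_zero, mul_zero, zero_mul]

lemma ratio_b (N a b c : ℕ) (h : a + (b + 1) + c ≤ N + 1) :
    qint (N + 1) * qmultinom N a b c =
      qint (b + 1) * qmultinom (N + 1) a (b + 1) c := by
  have h' : a + b + c ≤ N := by omega
  rw [qmultinom, if_pos h', qmultinom, if_pos h]
  have e1 : N + 1 - a - (b + 1) - c = N - a - b - c := by omega
  rw [e1, show qfact (b+1) = qfact b * qint (b+1) from rfl,
    show qfact (N+1) = qfact N * qint (N+1) from rfl]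
  have h1 := qfact_ne_zero a
  have h2 := qfact_ne_zero b
  have h3 := qfact_ne_zero c
  have h4 := qfact_ne_zero (N - a - b - c)
  have h5 : qint (b+1) ≠ 0 := qint_ne_zero (Nat.succ_ne_zero _)
  rw [mul_div_assoc', mul_div_assoc', div_eq_div_iff
    (by exact mul_ne_zero (mul_ne_zero (mul_ne_zero h1 h2) h3) h4)
    (by exact mul_ne_zero (mul_ne_zero (mul_ne_zero h1 (mul_ne_zero h2 h5)) h3) h4)]
  ring

lemma ratio_c (N a b c : ℕ) (h : a + b + (c + 1) ≤ N + 1) :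
    qint (N + 1) * qmultinom N a b c =
      qint (c + 1) * qmultinom (N + 1) a b (c + 1) := by
  have h' : a + b + c ≤ N := by omega
  rw [qmultinom, if_pos h', qmultinom, if_pos h]
  have e1 : N + 1 - a - b - (c + 1) = N - a - b - c := by omega
  rw [e1, show qfact (c+1) = qfact c * qint (c+1) from rfl,
    show qfact (N+1) = qfact N * qint (N+1) from rfl]
  have h1 := qfact_ne_zero a
  have h2 := qfact_ne_zero b
  have h3 := qfact_ne_zero c
  have h4 := qfact_ne_zero (N - a - b - c)
  have h5 : qint (c+1) ≠ 0 := qint_ne_zero (Nat.succ_ne_zero _)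
  rw [mul_div_assoc', mul_div_assoc', div_eq_div_iff
    (by exact mul_ne_zero (mul_ne_zero (mul_ne_zero h1 h2) h3) h4)
    (by exact mul_ne_zero (mul_ne_zero (mul_ne_zero h1 h2) (mul_ne_zero h3 h5)) h4)]
  ring

lemma ratio_a (N a b c : ℕ) (h : (a + 1) + b + c ≤ N + 1) :
    qint (N + 1) * qmultinom N a b c =
      qint (a + 1) * qmultinom (N + 1) (a + 1) b c := by
  have h' : a + b + c ≤ N := by omega
  rw [qmultinom, if_pos h', qmultinom, if_pos h]
  have e1 : N + 1 - (a + 1) - b - c = N - a - b - c := by omega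
  rw [e1, show qfact (a+1) = qfact a * qint (a+1) from rfl,
    show qfact (N+1) = qfact N * qint (N+1) from rfl]
  have h1 := qfact_ne_zero a
  have h2 := qfact_ne_zero b
  have h3 := qfact_ne_zero c
  have h4 := qfact_ne_zero (N - a - b - c)
  have h5 : qint (a+1) ≠ 0 := qint_ne_zero (Nat.succ_ne_zero _)
  rw [mul_div_assoc', mul_div_assoc', div_eq_div_iff
    (by exact mul_ne_zero (mul_ne_zero (mul_ne_zero h1 h2) h3) h4)
    (by exact mul_ne_zero (mul_ne_zero (mul_ne_zero (mul_ne_zero h1 h5) h2) h3) h4)]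
  ring

lemma qmultinom_zero {N a b c : ℕ} (h : N < a + b + c) : qmultinom N a b c = 0 := by
  rw [qmultinom, if_neg (by omega)]

/-- auxiliary guard -/
noncomputable def G (f : ℕ → RatFunc ℚ) : ℕ → RatFunc ℚ
  | 0 => 0
  | n + 1 => f n

lemma pascal (N a b c : ℕ) :
    s ^ ((a : ℤ) + b - c) * qmultinom (N + 1) a b c =
      qmultinom N a b c + s ^ ((N : ℤ) + 1 + a - c) * G (fun b' => qmultinom N a b' c) b
        + s ^ ((a : ℤ) + b - ((N : ℤ) + 1)) * G (fun c' => qmultinom N a b c') c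
        + s ^ ((N : ℤ) + 1 - b - c) * G (fun a' => qmultinom N a' b c) a := by
  by_cases h : a + b + c ≤ N + 1
  · apply mul_left_cancel₀ (qint_ne_zero (Nat.succ_ne_zero N) : qint (N+1) ≠ 0)
    have hGb : qint (N+1) * (s ^ ((N : ℤ) + 1 + a - c) * G (fun b' => qmultinom N a b' c) b)
        = s ^ ((N : ℤ) + 1 + a - c) * (qint b * qmultinom (N+1) a b c) := by
      cases b with
      | zero => simp [G, qint_zero]
      | succ b => rw [show G (fun b' => qmultinom N a b' c) (b+1) = qmultinom N a b c from rfl]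
                  rw [mul_left_comm, ratio_b N a b c h]
    have hGc : qint (N+1) * (s ^ ((a : ℤ) + b - ((N : ℤ) + 1)) * G (fun c' => qmultinom N a b c') c)
        = s ^ ((a : ℤ) + b - ((N : ℤ) + 1)) * (qint c * qmultinom (N+1) a b c) := by
      cases c with
      | zero => simp [G, qint_zero]
      | succ c => rw [show G (fun c' => qmultinom N a b c') (c+1) = qmultinom N a b c from rfl]
                  rw [mul_left_comm, ratio_c N a b c h]
    have hGa : qint (N+1) * (s ^ ((N : ℤ) + 1 - b - c) * G (fun a' => qmultinom N a' b c) a)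
        = s ^ ((N : ℤ) + 1 - b - c) * (qint a * qmultinom (N+1) a b c) := by
      cases a with
      | zero => simp [G, qint_zero]
      | succ a => rw [show G (fun a' => qmultinom N a' b c) (a+1) = qmultinom N a b c from rfl]
                  rw [mul_left_comm, ratio_a N a b c h]
    rw [mul_add, mul_add, mul_add, hGb, hGc, hGa, ratio_top N a b c h,
      mul_left_comm]
    have := congrArg (· * qmultinom (N+1) a b c) (qint_core N a b c h)
    simp only [add_mul, mul_assoc] at this
    rw [this]
  · have hz : qmultinom (N+1) a b c = 0 := qmultinom_zero (by omega)
    have h0 : qmultinom N a b c = 0 := qmultinom_zero (by omega)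
    have hb : G (fun b' => qmultinom N a b' c) b = 0 := by
      cases b with
      | zero => rfl
      | succ b => exact qmultinom_zero (by omega)
    have hc : G (fun c' => qmultinom N a b c') c = 0 := by
      cases c with
      | zero => rfl
      | succ c => exact qmultinom_zero (by omega)
    have ha : G (fun a' => qmultinom N a' b c) a = 0 := by
      cases a with
      | zero => rfl
      | succ a => exact qmultinom_zero (by omega)
    rw [hz, h0, ha, hb, hc]
    ring

noncomputable def Cc (m : ℤ) : ℕ → ℕ → ℕ → ℕ → RatFunc ℚ
  | 0, a, b, c => if a = 0 ∧ b = 0 ∧ c = 0 then 1 else 0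
  | N + 1, a, b, c =>
      Cc m N a b c
      + s ^ (m + 2 * (N : ℤ) + 2 * (a : ℤ) - 2 * (c : ℤ)) * G (fun b' => Cc m N a b' c) b
      + s ^ (2 * (a : ℤ) - m - 2 * (N : ℤ)) * G (fun c' => Cc m N a b c') c
      + s ^ (m + 2 * (N : ℤ)) * G (fun a' => Cc m N a' b c) a

lemma Cc_vanish (m : ℤ) : ∀ N a b c, N < a + b + c → Cc m N a b c = 0 := by
  intro N
  induction N with
  | zero =>
    intro a b c h
    rw [Cc, if_neg (by omega)]
  | succ N ih =>
    intro a b c h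
    have h1 : G (fun b' => Cc m N a b' c) b = 0 := by
      cases b with
      | zero => rfl
      | succ b => exact ih a b c (by omega)
    have h2 : G (fun c' => Cc m N a b c') c = 0 := by
      cases c with
      | zero => rfl
      | succ c => exact ih a b c (by omega)
    have h3 : G (fun a' => Cc m N a' b c) a = 0 := by
      cases a with
      | zero => rfl
      | succ a => exact ih a b c (by omega)
    rw [Cc, ih a b c (by omega), h1, h2, h3]
    ring

lemma Cc_closed (m : ℤ) : ∀ N a b c, Cc m N a b c =
    s ^ ((m + N - 1) * ((a : ℤ) + b - c) + ((a : ℤ) * b + (a : ℤ) * c - (b : ℤ) * c)) *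
      qmultinom N a b c := by
  have hs := s_ne_zero
  intro N
  induction N with
  | zero =>
    intro a b c
    by_cases h : a = 0 ∧ b = 0 ∧ c = 0
    · obtain ⟨rfl, rfl, rfl⟩ := h
      rw [Cc, if_pos ⟨rfl, rfl, rfl⟩, qmultinom, if_pos (by omega)]
      norm_num [qfact]
    · rw [Cc, if_neg h, qmultinom, if_neg (by omega), mul_zero]
  | succ N ih =>
    intro a b c
    have hp := pascal N a b c
    have hK : (m + ((N + 1 : ℕ) : ℤ) - 1) * ((a : ℤ) + b - c) +
        ((a : ℤ) * b + (a : ℤ) * c - (b : ℤ) * c) =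
        ((m + (N : ℤ) - 1) * ((a : ℤ) + b - c) +
          ((a : ℤ) * b + (a : ℤ) * c - (b : ℤ) * c)) + ((a : ℤ) + b - c) := by
      push_cast; ring
    rw [hK, zpow_add₀ hs, mul_assoc, hp, Cc, ih a b c, mul_add, mul_add, mul_add]
    congr 1
    · congr 1
      · congr 1
        cases b with
        | zero => simp [G]
        | succ b =>
          rw [show G (fun b' => Cc m N a b' c) (b+1) = Cc m N a b c from rfl,
            show G (fun b' => qmultinom N a b' c) (b+1) = qmultinom N a b c from rfl,
            ih a b c]
          simp only [← mul_assoc, ← zpow_add₀ hs]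
          push_cast
          ring_nf
      · cases c with
        | zero => simp [G]
        | succ c =>
          rw [show G (fun c' => Cc m N a b c') (c+1) = Cc m N a b c from rfl,
            show G (fun c' => qmultinom N a b c') (c+1) = qmultinom N a b c from rfl,
            ih a b c]
          simp only [← mul_assoc, ← zpow_add₀ hs]
          push_cast
          ring_nf
    · cases a with
      | zero => simp [G]
      | succ a =>
        rw [show G (fun a' => Cc m N a' b c) (a+1) = Cc m N a b c from rfl,
          show G (fun a' => qmultinom N a' b c) (a+1) = qmultinom N a b c from rfl,
          ih a b c]
        simp only [← mul_assoc, ← zpow_add₀ hs]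
        push_cast
        ring_nf

section AlgebraPart

variable {A : Type*} [Ring A] [Algebra (RatFunc ℚ) A]

local notation "φ" => algebraMap (RatFunc ℚ) A

lemma cmove (w : RatFunc ℚ) (u v : A) : u * (φ w * v) = φ w * (u * v) := by
  rw [← mul_assoc, ← Algebra.commutes w u, mul_assoc]

lemma qpow {x y : A} {w : RatFunc ℚ} (h : y * x = φ w * (x * y)) :
    ∀ n : ℕ, y ^ n * x = φ (w ^ n) * (x * y ^ n) := by
  intro n
  induction n with
  | zero => simp
  | succ n ih =>
    calc y ^ (n+1) * x = y ^ n * (y * x) := by rw [pow_succ, mul_assoc]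
    _ = y ^ n * (φ w * (x * y)) := by rw [h]
    _ = φ w * (y ^ n * x * y) := by rw [cmove, mul_assoc]
    _ = φ w * (φ (w ^ n) * (x * y ^ n) * y) := by rw [ih]
    _ = φ w * φ (w ^ n) * (x * (y ^ n * y)) := by simp only [mul_assoc]
    _ = φ (w ^ (n+1)) * (x * y ^ (n+1)) := by rw [← map_mul, ← pow_succ, ← pow_succ']

variable {xr xg xb : A}

lemma swap_br (hrb : xr * xb = φ (s ^ (-2 : ℤ)) * (xb * xr)) :
    xb * xr = φ (s ^ (2 : ℤ)) * (xr * xb) := by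
  rw [hrb, ← mul_assoc, ← map_mul, ← zpow_add₀ s_ne_zero]
  norm_num

lemma swap_gr (hrg : xr * xg = φ (s ^ 2) * (xg * xr)) :
    xg * xr = φ (s ^ (-2 : ℤ)) * (xr * xg) := by
  rw [hrg, ← mul_assoc, ← map_mul]
  rw [show (s ^ (-2 : ℤ)) * s ^ 2 = 1 by
    rw [← zpow_natCast s 2, ← zpow_add₀ s_ne_zero]; norm_num]
  rw [map_one, one_mul]

lemma swap_bg (hgb : xg * xb = φ (s ^ (-2 : ℤ)) * (xb * xg)) :
    xb * xg = φ (s ^ (2 : ℤ)) * (xg * xb) := by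
  rw [hgb, ← mul_assoc, ← map_mul, ← zpow_add₀ s_ne_zero]
  norm_num

lemma pow_br (hbr : xb * xr = φ (s ^ (2 : ℤ)) * (xr * xb)) (a : ℕ) :
    xb ^ a * xr = φ (s ^ (2 * (a : ℤ))) * (xr * xb ^ a) := by
  have := qpow hbr a
  rwa [← zpow_natCast (s ^ (2 : ℤ)) a, ← zpow_mul] at this

lemma pow_gr (hgr : xg * xr = φ (s ^ (-2 : ℤ)) * (xr * xg)) (c : ℕ) :
    xg ^ c * xr = φ (s ^ ((-2) * (c : ℤ))) * (xr * xg ^ c) := by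
  have := qpow hgr c
  rwa [← zpow_natCast (s ^ (-2 : ℤ)) c, ← zpow_mul] at this

lemma pow_bg (hbg : xb * xg = φ (s ^ (2 : ℤ)) * (xg * xb)) (a : ℕ) :
    xb ^ a * xg = φ (s ^ (2 * (a : ℤ))) * (xg * xb ^ a) := by
  have := qpow hbg a
  rwa [← zpow_natCast (s ^ (2 : ℤ)) a, ← zpow_mul] at this

lemma pow_gr' (hgr : xg * xr = φ (s ^ (-2 : ℤ)) * (xr * xg)) (c : ℕ) (z : A) :
    xg ^ c * (xr * z) = φ (s ^ ((-2) * (c : ℤ))) * (xr * (xg ^ c * z)) := by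
  rw [← mul_assoc, pow_gr hgr c, mul_assoc, mul_assoc]

lemma Lr (hbr : xb * xr = φ (s ^ (2 : ℤ)) * (xr * xb))
    (hgr : xg * xr = φ (s ^ (-2 : ℤ)) * (xr * xg)) (a b c : ℕ) :
    (xr ^ b * xg ^ c * xb ^ a) * xr =
      φ (s ^ (2 * (a : ℤ) + (-2) * (c : ℤ))) * (xr ^ (b+1) * xg ^ c * xb ^ a) := by
  simp only [mul_assoc]
  rw [pow_br hbr a, cmove, cmove, pow_gr' hgr c, cmove, ← mul_assoc (xr ^ b) xr,
    ← pow_succ, ← mul_assoc, ← map_mul, ← zpow_add₀ s_ne_zero]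

lemma Lg (hbg : xb * xg = φ (s ^ (2 : ℤ)) * (xg * xb)) (a b c : ℕ) :
    (xr ^ b * xg ^ c * xb ^ a) * xg =
      φ (s ^ (2 * (a : ℤ))) * (xr ^ b * xg ^ (c+1) * xb ^ a) := by
  simp only [mul_assoc]
  rw [pow_bg hbg a, cmove, cmove, ← mul_assoc (xg ^ c) xg, ← pow_succ]

lemma Lb (a b c : ℕ) :
    (xr ^ b * xg ^ c * xb ^ a) * xb = xr ^ b * xg ^ c * xb ^ (a+1) := by
  simp only [mul_assoc]
  rw [← pow_succ]

lemma term_r (hbr : xb * xr = φ (s ^ (2 : ℤ)) * (xr * xb))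
    (hgr : xg * xr = φ (s ^ (-2 : ℤ)) * (xr * xg)) (C w : RatFunc ℚ) (a b c : ℕ) :
    (φ C * (xr ^ b * xg ^ c * xb ^ a)) * (φ w * xr) =
      φ (C * w * s ^ (2 * (a : ℤ) + (-2) * (c : ℤ))) * (xr ^ (b+1) * xg ^ c * xb ^ a) := by
  rw [mul_assoc, cmove, Lr hbr hgr a b c, ← mul_assoc, ← map_mul, ← mul_assoc, ← map_mul]

lemma term_g (hbg : xb * xg = φ (s ^ (2 : ℤ)) * (xg * xb)) (C w : RatFunc ℚ) (a b c : ℕ) :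
    (φ C * (xr ^ b * xg ^ c * xb ^ a)) * (φ w * xg) =
      φ (C * w * s ^ (2 * (a : ℤ))) * (xr ^ b * xg ^ (c+1) * xb ^ a) := by
  rw [mul_assoc, cmove, Lg hbg a b c, ← mul_assoc, ← map_mul, ← mul_assoc, ← map_mul]

lemma term_b (C w : RatFunc ℚ) (a b c : ℕ) :
    (φ C * (xr ^ b * xg ^ c * xb ^ a)) * (φ w * xb) =
      φ (C * w) * (xr ^ b * xg ^ c * xb ^ (a+1)) := by
  rw [mul_assoc, cmove, Lb a b c, ← mul_assoc, ← map_mul]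

open Finset in
lemma sum3_ext (n : ℕ) (f : ℕ → ℕ → ℕ → A)
    (h : ∀ a b c, (a = n ∨ b = n ∨ c = n) → f a b c = 0) :
    ∑ a ∈ range (n+1), ∑ b ∈ range (n+1), ∑ c ∈ range (n+1), f a b c
      = ∑ a ∈ range n, ∑ b ∈ range n, ∑ c ∈ range n, f a b c := by
  have h1 : ∑ b ∈ range (n+1), ∑ c ∈ range (n+1), f n b c = 0 :=
    Finset.sum_eq_zero fun b _ => Finset.sum_eq_zero fun c _ => h n b c (Or.inl rfl)
  rw [Finset.sum_range_succ, h1, add_zero]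
  apply Finset.sum_congr rfl; intro a _
  have h2 : ∑ c ∈ range (n+1), f a n c = 0 :=
    Finset.sum_eq_zero fun c _ => h a n c (Or.inr (Or.inl rfl))
  rw [Finset.sum_range_succ, h2, add_zero]
  apply Finset.sum_congr rfl; intro b _
  rw [Finset.sum_range_succ, h a b n (Or.inr (Or.inr rfl)), add_zero]

open Finset in
lemma sum3_shift_b (n : ℕ) (f g : ℕ → ℕ → ℕ → A)
    (h0 : ∀ a c, f a 0 c = 0)
    (hsucc : ∀ a b c, f a (b+1) c = g a b c)
    (hv : ∀ a b c, (a = n ∨ c = n) → f a b c = 0) :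
    ∑ a ∈ range (n+1), ∑ b ∈ range (n+1), ∑ c ∈ range (n+1), f a b c
      = ∑ a ∈ range n, ∑ b ∈ range n, ∑ c ∈ range n, g a b c := by
  have h1 : ∑ b ∈ range (n+1), ∑ c ∈ range (n+1), f n b c = 0 :=
    Finset.sum_eq_zero fun b _ => Finset.sum_eq_zero fun c _ => hv n b c (Or.inl rfl)
  rw [Finset.sum_range_succ, h1, add_zero]
  apply Finset.sum_congr rfl; intro a _
  have hc : ∀ b, ∑ c ∈ range (n+1), f a b c = ∑ c ∈ range n, f a b c := fun b => by
    rw [Finset.sum_range_succ, hv a b n (Or.inr rfl), add_zero]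
  simp only [hc]
  rw [Finset.sum_range_succ']
  have h0' : ∑ c ∈ range n, f a 0 c = 0 := Finset.sum_eq_zero fun c _ => h0 a c
  rw [h0', add_zero]
  exact Finset.sum_congr rfl fun b _ => Finset.sum_congr rfl fun c _ => hsucc a b c

open Finset in
lemma sum3_shift_c (n : ℕ) (f g : ℕ → ℕ → ℕ → A)
    (h0 : ∀ a b, f a b 0 = 0)
    (hsucc : ∀ a b c, f a b (c+1) = g a b c)
    (hv : ∀ a b c, (a = n ∨ b = n) → f a b c = 0) :
    ∑ a ∈ range (n+1), ∑ b ∈ range (n+1), ∑ c ∈ range (n+1), f a b c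
      = ∑ a ∈ range n, ∑ b ∈ range n, ∑ c ∈ range n, g a b c := by
  have h1 : ∑ b ∈ range (n+1), ∑ c ∈ range (n+1), f n b c = 0 :=
    Finset.sum_eq_zero fun b _ => Finset.sum_eq_zero fun c _ => hv n b c (Or.inl rfl)
  rw [Finset.sum_range_succ, h1, add_zero]
  apply Finset.sum_congr rfl; intro a _
  have h2 : ∑ c ∈ range (n+1), f a n c = 0 :=
    Finset.sum_eq_zero fun c _ => hv a n c (Or.inr rfl)
  rw [Finset.sum_range_succ, h2, add_zero]
  apply Finset.sum_congr rfl; intro b _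
  rw [Finset.sum_range_succ', h0 a b, add_zero]
  exact Finset.sum_congr rfl fun c _ => hsucc a b c

open Finset in
lemma sum3_shift_a (n : ℕ) (f g : ℕ → ℕ → ℕ → A)
    (h0 : ∀ b c, f 0 b c = 0)
    (hsucc : ∀ a b c, f (a+1) b c = g a b c)
    (hv : ∀ a b c, (b = n ∨ c = n) → f a b c = 0) :
    ∑ a ∈ range (n+1), ∑ b ∈ range (n+1), ∑ c ∈ range (n+1), f a b c
      = ∑ a ∈ range n, ∑ b ∈ range n, ∑ c ∈ range n, g a b c := by
  rw [Finset.sum_range_succ']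
  have h0' : ∑ b ∈ range (n+1), ∑ c ∈ range (n+1), f 0 b c = 0 :=
    Finset.sum_eq_zero fun b _ => Finset.sum_eq_zero fun c _ => h0 b c
  rw [h0', add_zero]
  apply Finset.sum_congr rfl; intro a _
  have h2 : ∑ c ∈ range (n+1), f (a+1) n c = 0 :=
    Finset.sum_eq_zero fun c _ => hv (a+1) n c (Or.inl rfl)
  rw [Finset.sum_range_succ, h2, add_zero]
  apply Finset.sum_congr rfl; intro b _
  rw [Finset.sum_range_succ, hv (a+1) b n (Or.inr rfl), add_zero]
  exact Finset.sum_congr rfl fun c _ => hsucc a b c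

open Finset in
theorem expand
    (hbr : xb * xr = φ (s ^ (2 : ℤ)) * (xr * xb))
    (hgr : xg * xr = φ (s ^ (-2 : ℤ)) * (xr * xg))
    (hbg : xb * xg = φ (s ^ (2 : ℤ)) * (xg * xb))
    (m : ℤ) : ∀ N : ℕ,
    ((List.range N).map fun (k : ℕ) =>
        1 + φ (s ^ (m + 2 * (k : ℤ))) * xr + φ (s ^ (-(m + 2 * (k : ℤ)))) * xg
          + φ (s ^ (m + 2 * (k : ℤ))) * xb).prod
      = ∑ a ∈ range (N+1), ∑ b ∈ range (N+1), ∑ c ∈ range (N+1),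
          φ (Cc m N a b c) * (xr ^ b * xg ^ c * xb ^ a) := by
  intro N
  induction N with
  | zero => simp [Cc]
  | succ N ih =>
    rw [List.range_succ, List.map_append, List.prod_append, ih]
    simp only [List.map_cons, List.map_nil, List.prod_cons, List.prod_nil, mul_one]
    have Cs : ∀ a b c : ℕ, Cc m (N+1) a b c =
        Cc m N a b c
        + s ^ (m + 2 * (N : ℤ) + 2 * (a : ℤ) - 2 * (c : ℤ)) * G (fun b' => Cc m N a b' c) b
        + s ^ (2 * (a : ℤ) - m - 2 * (N : ℤ)) * G (fun c' => Cc m N a b c') c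
        + s ^ (m + 2 * (N : ℤ)) * G (fun a' => Cc m N a' b c) a := fun _ _ _ => rfl
    simp only [Cs, map_add, add_mul, Finset.sum_add_distrib]
    rw [mul_add, mul_add, mul_add, mul_one]
    simp only [Finset.sum_mul]
    congr 1
    · congr 1
      · congr 1
        · -- E0
          refine (sum3_ext (N+1) _ ?_).symm
          intro a b c h
          rw [Cc_vanish m N a b c (by omega), map_zero, zero_mul]
        · -- E1 : xr shift in b
          refine (sum3_shift_b (N+1) _ _ ?_ ?_ ?_).symm
          · intro a c; simp [G]
          · intro a b c
            rw [show G (fun b' => Cc m N a b' c) (b+1) = Cc m N a b c from rfl,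
              term_r hbr hgr]
            congr 1
            apply congrArg
            simp only [mul_assoc, ← zpow_add₀ s_ne_zero]
            ring_nf
          · intro a b c h
            cases b with
            | zero => simp [G]
            | succ b =>
              rw [show G (fun b' => Cc m N a b' c) (b+1) = Cc m N a b c from rfl,
                Cc_vanish m N a b c (by omega)]
              simp
      · -- E2 : xg shift in c
        refine (sum3_shift_c (N+1) _ _ ?_ ?_ ?_).symm
        · intro a b; simp [G]
        · intro a b c
          rw [show G (fun c' => Cc m N a b c') (c+1) = Cc m N a b c from rfl,
            term_g hbg]
          congr 1
          apply congrArg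
          simp only [mul_assoc, ← zpow_add₀ s_ne_zero]
          ring_nf
        · intro a b c h
          cases c with
          | zero => simp [G]
          | succ c =>
            rw [show G (fun c' => Cc m N a b c') (c+1) = Cc m N a b c from rfl,
              Cc_vanish m N a b c (by omega)]
            simp
    · -- E3 : xb shift in a
      refine (sum3_shift_a (N+1) _ _ ?_ ?_ ?_).symm
      · intro b c; simp [G]
      · intro a b c
        rw [show G (fun a' => Cc m N a' b c) (a+1) = Cc m N a b c from rfl,
          term_b]
        congr 1
        apply congrArg
        rw [mul_comm]
      · intro a b c h
        cases a with
        | zero => simp [G]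
        | succ a =>
          rw [show G (fun a' => Cc m N a' b c) (a+1) = Cc m N a b c from rfl,
            Cc_vanish m N a b c (by omega)]
          simp

end AlgebraPart

/-- (Theorem 2 for the tetrahedron graph.)  Let `x_r, x_g, x_b`
be elements of a (noncommutative) `ℤ[q^{±1/2}]`-algebra `A` (realized as an algebra
over `K = ℚ(q^{1/2})`, so `q = s²` is central and invertible) satisfying
`x_r x_g = q x_g x_r`, `x_r x_b = q⁻¹ x_b x_r`, `x_g x_b = q⁻¹ x_b x_g`.
Then the ordered product `∏_{j ∈ A_N} (1 + q^j x_r + q^{-j} x_g + q^j x_b)` over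
`A_N = {-(N-1)/2, …, (N-1)/2}` in increasing order (`q^j = s^(1-N+2k)`, `k = 0,…,N-1`),
written in the normal order `x_r^b x_g^c x_b^a` up to a power of `q^{1/2}` (the exponent
`e a b c`), has total coefficient of `x_r^b x_g^c x_b^a` the symmetric quantum
multinomial `[N]!/([a]![b]![c]![N-a-b-c]!)`. -/
theorem tetrahedron_quantum_product (N : ℕ) (A : Type*) [Ring A]
    [Algebra (RatFunc ℚ) A] (xr xg xb : A)
    (hrg : xr * xg = algebraMap (RatFunc ℚ) A (s ^ 2) * (xg * xr))
    (hrb : xr * xb = algebraMap (RatFunc ℚ) A (s ^ (-2 : ℤ)) * (xb * xr))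
    (hgb : xg * xb = algebraMap (RatFunc ℚ) A (s ^ (-2 : ℤ)) * (xb * xg)) :
    ∃ e : ℕ → ℕ → ℕ → ℤ,
      ((List.range N).map fun k =>
          1 + algebraMap (RatFunc ℚ) A (s ^ (1 - (N : ℤ) + 2 * k)) * xr
            + algebraMap (RatFunc ℚ) A (s ^ (-(1 - (N : ℤ) + 2 * k))) * xg
            + algebraMap (RatFunc ℚ) A (s ^ (1 - (N : ℤ) + 2 * k)) * xb).prod =
        ∑ p ∈ range (N + 1) ×ˢ range (N + 1) ×ˢ range (N + 1),
          algebraMap (RatFunc ℚ) A (s ^ e p.1 p.2.1 p.2.2 * qmultinom N p.1 p.2.1 p.2.2) *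
            (xr ^ p.2.1 * xg ^ p.2.2 * xb ^ p.1) := by
  refine ⟨fun a b c => (a : ℤ) * b + (a : ℤ) * c - (b : ℤ) * c, ?_⟩
  have hbr := swap_br hrb
  have hgr := swap_gr hrg
  have hbg := swap_bg hgb
  have H := expand hbr hgr hbg (1 - (N : ℤ)) N
  rw [show ((List.range N : List ℤ)) = List.map Nat.cast (List.range N) from
    List.flatMap_pure_eq_map _ _, List.map_map]
  refine Eq.trans H ?_
  rw [Finset.sum_product]
  refine Finset.sum_congr rfl fun a _ => ?_
  rw [Finset.sum_product]
  refine Finset.sum_congr rfl fun b _ => ?_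
  refine Finset.sum_congr rfl fun c _ => ?_
  simp only
  rw [Cc_closed]
  rw [show ((1 - (N : ℤ)) + (N : ℤ) - 1) * ((a : ℤ) + b - c)
      + ((a : ℤ) * b + (a : ℤ) * c - (b : ℤ) * c)
      = (a : ℤ) * b + (a : ℤ) * c - (b : ℤ) * c by ring]
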